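/- Let G be a finite simple graph with vertex set V and edge set E, and let w : E → ℝ be an injective weight function. Let F be the set of edges e = {u,v} ∈ E such that u and v are not connected in the spanning subgraph of G whose edge set is { f ∈ E : w(f) < w(e) }. Then the spanning subgraph (V, F) is acyclic (a forest), and for all u, v ∈ V, u and v are connected in (V, F) if and only if they are connected in G; that is, (V, F) is a spanning forest of G (it is the unique minimum-weight spanning forest of (G, w)). -/
import Mathlib

open SimpleGraph

/-- If every adjacency of `A` yields reachability in `H`, then reachability in `A`
implies reachability in `H`. -/
lemma reach_trans_aux {V : Type} {A H : SimpleGraph V}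
    (h : ∀ a b : V, A.Adj a b → H.Reachable a b) {u v : V}
    (p : A.Walk u v) : H.Reachable u v := by
  induction p with
  | nil => exact Reachable.refl _
  | cons hadj _ ih => exact (h _ _ hadj).trans ih

/-- let `G` be a finite simple graph with edge weights `w` that are injective
on the edge set, and let `F` be the set of edges `e = {u,v}` of `G` such that `u` and `v`
are not connected in the spanning subgraph of `G` whose edges are the edges of `G` of
weight smaller than `w e`.  Then the spanning subgraph `(V, F)` is acyclic, and two
vertices are connected in `(V, F)` iff they are connected in `G`; that is, `(V, F)` is a
spanning forest of `G` (the unique minimum-weight spanning forest). -/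
theorem stmt_11 {V : Type} [Fintype V] (G : SimpleGraph V) (w : Sym2 V → ℝ)
    (hw : Set.InjOn w G.edgeSet) :
    ∀ F : Set (Sym2 V),
      F = {e | e ∈ G.edgeSet ∧ ∀ u v : V, e = s(u, v) →
            ¬ (SimpleGraph.fromEdgeSet {f | f ∈ G.edgeSet ∧ w f < w e}).Reachable u v} →
      (SimpleGraph.fromEdgeSet F).IsAcyclic ∧
      (∀ u v : V, (SimpleGraph.fromEdgeSet F).Reachable u v ↔ G.Reachable u v) := by
  classical
  intro F hF
  have hFE : F ⊆ G.edgeSet := by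
    rw [hF]; exact fun e he => he.1
  set H := SimpleGraph.fromEdgeSet F with hH
  -- H ≤ G
  have hHG : H ≤ G := by
    intro a b hab
    rw [hH, fromEdgeSet_adj] at hab
    exact (SimpleGraph.mem_edgeSet G).1 (hFE hab.1)
  constructor
  · -- Acyclicity
    intro a p hp
    -- pick a maximal-weight edge of the cycle
    have hne : p.edges ≠ [] := by
      intro h
      cases p with
      | nil => exact hp.ne_nil rfl
      | cons h' q => simp at h
    obtain ⟨e, heP, hemax⟩ := p.edges.toFinset.exists_max_image w
      (by simpa [List.toFinset_eq_empty_iff] using hne)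
    rw [List.mem_toFinset] at heP
    have heH : e ∈ H.edgeSet := p.edges_subset_edgeSet heP
    have heF : e ∈ F := ((SimpleGraph.edgeSet_fromEdgeSet F) ▸ heH).1
    have heE : e ∈ G.edgeSet := hFE heF
    -- destructure e
    induction e using Sym2.ind with
    | _ u v =>
    -- H' : graph on the cycle's edges
    set H' := SimpleGraph.fromEdgeSet {f | f ∈ p.edges} with hH'
    have hsub : ∀ f ∈ p.edges, f ∈ H'.edgeSet := by
      intro f hf
      rw [hH', SimpleGraph.edgeSet_fromEdgeSet]
      exact ⟨hf, SimpleGraph.not_isDiag_of_mem_edgeSet H (p.edges_subset_edgeSet hf)⟩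
    have hcyc' : (p.transfer H' hsub).IsCycle := hp.transfer hsub
    have hmem' : s(u, v) ∈ (p.transfer H' hsub).edges := by
      rwa [SimpleGraph.Walk.edges_transfer]
    have hkey := (SimpleGraph.adj_and_reachable_delete_edges_iff_exists_cycle
      (G := H')).2 ⟨a, p.transfer H' hsub, hcyc', hmem'⟩
    obtain ⟨-, hreach⟩ := hkey
    -- transfer reachability into the graph of smaller-weight edges
    have hmono : (H' \ SimpleGraph.fromEdgeSet {s(u, v)}) ≤
        SimpleGraph.fromEdgeSet {f | f ∈ G.edgeSet ∧ w f < w s(u, v)} := by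
      intro x y hxy
      rw [SimpleGraph.sdiff_adj, hH', fromEdgeSet_adj, fromEdgeSet_adj] at hxy
      obtain ⟨⟨hxyP, hxyne⟩, hnot⟩ := hxy
      have hxyF : s(x, y) ∈ F := ((SimpleGraph.edgeSet_fromEdgeSet F) ▸
        p.edges_subset_edgeSet hxyP).1
      have hxyE : s(x, y) ∈ G.edgeSet := hFE hxyF
      have hneq : s(x, y) ≠ s(u, v) := by
        intro h
        exact hnot ⟨h ▸ rfl, hxyne⟩
      have hle : w s(x, y) ≤ w s(u, v) := hemax _ (List.mem_toFinset.2 hxyP)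
      have hlt : w s(x, y) < w s(u, v) :=
        lt_of_le_of_ne hle (fun h => hneq (hw hxyE heE h))
      rw [fromEdgeSet_adj]
      exact ⟨⟨hxyE, hlt⟩, hxyne⟩
    have hreach2 := hreach.mono hmono
    rw [hF] at heF
    exact heF.2 u v rfl hreach2
  · -- Spanning
    intro u v
    constructor
    · intro h
      exact h.mono hHG
    · intro h
      -- key: every edge of G has reachable endpoints in H, by strong induction on
      -- the number of strictly lighter edges
      have key : ∀ n : ℕ, ∀ e ∈ G.edgeSet,
          {f | f ∈ G.edgeSet ∧ w f < w e}.ncard = n →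
          ∀ x y : V, e = s(x, y) → H.Reachable x y := by
        intro n
        induction n using Nat.strong_induction_on with
        | _ n ih =>
        intro e heE hcard x y hexy
        by_cases heF : e ∈ F
        · refine SimpleGraph.Adj.reachable ?_
          rw [hH, fromEdgeSet_adj]
          refine ⟨hexy ▸ heF, ?_⟩
          have : G.Adj x y := (SimpleGraph.mem_edgeSet G).1 (hexy ▸ heE)
          exact this.ne
        · rw [hF] at heF
          simp only [Set.mem_setOf_eq, not_and, not_forall] at heF
          obtain ⟨x', y', hexy', hreach⟩ := heF heE
          rw [not_not] at hreach
          -- relate (x,y) and (x',y')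
          have hxy' : (SimpleGraph.fromEdgeSet
              {f | f ∈ G.edgeSet ∧ w f < w e}).Reachable x y := by
            rw [hexy] at hexy'
            rw [Sym2.eq_iff] at hexy'
            rcases hexy' with ⟨hx, hy⟩ | ⟨hx, hy⟩
            · rwa [hx, hy]
            · rw [hx, hy]; exact hreach.symm
          obtain ⟨p⟩ := hxy'
          refine reach_trans_aux (fun a b hab => ?_) p
          rw [fromEdgeSet_adj] at hab
          obtain ⟨⟨hfE, hflt⟩, -⟩ := hab
          -- the set of edges lighter than s(a,b) is strictly smaller
          have hss : {g | g ∈ G.edgeSet ∧ w g < w s(a, b)} ⊂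
              {g | g ∈ G.edgeSet ∧ w g < w e} := by
            constructor
            · intro g hg
              exact ⟨hg.1, lt_trans hg.2 hflt⟩
            · intro hcon
              have : s(a, b) ∈ {g | g ∈ G.edgeSet ∧ w g < w e} := ⟨hfE, hflt⟩
              have := hcon this
              exact lt_irrefl _ this.2
          have hfin : {g | g ∈ G.edgeSet ∧ w g < w e}.Finite := Set.toFinite _
          have hlt : {g | g ∈ G.edgeSet ∧ w g < w s(a, b)}.ncard < n := by
            rw [← hcard]
            exact Set.ncard_lt_ncard hss hfin
          exact ih _ hlt s(a, b) hfE rfl a b rfl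
      -- now induct on a walk in G
      obtain ⟨p⟩ := h
      refine reach_trans_aux (fun a b hab => ?_) p
      exact key _ s(a, b) ((SimpleGraph.mem_edgeSet G).2 hab) rfl a b rfl
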